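/- Let (μ̃, μ) be a pair of probability measures with finite moments, Jacobi parameters (β̃_n, γ̃_n) and (β_n, γ_n) respectively, and two-state free cumulants R_n(μ̃, μ). Then R_1 = β̃_0, R_2 = γ̃_0, R_3 = γ̃_0(β̃_1 − β_0), and R_4 = γ̃_0[(β̃_1 − β_0)² + (γ̃_1 − γ_0)]. -/

import Mathlib

open scoped Classical
open MeasureTheory Finset

noncomputable section

/-- `V` is nested inside `U`: some interval with endpoints in `U` contains all of `V`. -/
def Nests {m : ℕ} (U V : Finset (Fin m)) : Prop :=
  ∃ r ∈ U, ∃ s ∈ U, ∀ k ∈ V, r ≤ k ∧ k ≤ s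

/-- A finpartition of `{1,...,m}` is noncrossing. -/
def IsNoncrossing {m : ℕ} (π : Finpartition (Finset.univ : Finset (Fin m))) : Prop :=
  ∀ V₁ ∈ π.parts, ∀ V₂ ∈ π.parts, ∀ x₁ x₂ x₃ x₄ : Fin m,
    x₁ < x₂ → x₂ < x₃ → x₃ < x₄ →
    x₁ ∈ V₁ → x₃ ∈ V₁ → x₂ ∈ V₂ → x₄ ∈ V₂ → V₁ = V₂

/-- The depth of a block: the number of other blocks nesting it. -/
def depth {m : ℕ} (π : Finpartition (Finset.univ : Finset (Fin m)))
    (V : Finset (Fin m)) : ℕ :=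
  (π.parts.filter (fun U => U ≠ V ∧ Nests U V)).card

/-- Noncrossing partitions of `{1,...,m}`. -/
def NCset (m : ℕ) : Finset (Finpartition (Finset.univ : Finset (Fin m))) :=
  Finset.univ.filter IsNoncrossing

/-- Noncrossing partitions with all blocks of size at most 2. -/
def NC12 (m : ℕ) : Finset (Finpartition (Finset.univ : Finset (Fin m))) :=
  Finset.univ.filter (fun π => IsNoncrossing π ∧ ∀ V ∈ π.parts, V.card ≤ 2)

/-- Interval partitions of `{1,...,m}`. -/
def IntPart (m : ℕ) : Finset (Finpartition (Finset.univ : Finset (Fin m))) :=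
  Finset.univ.filter
    (fun π => ∀ V ∈ π.parts, ∀ x ∈ V, ∀ y ∈ V, ∀ z : Fin m, x ≤ z → z ≤ y → z ∈ V)

/-- The `m`-th moment of a measure on `ℝ`. -/
def mom (μ : Measure ℝ) (m : ℕ) : ℝ := ∫ x, x ^ m ∂μ

/-- `μ` has all moments finite. -/
def FiniteMoments (μ : Measure ℝ) : Prop :=
  ∀ m : ℕ, Integrable (fun x => x ^ m) μ

/-- `(β, γ)` are Jacobi parameters for `μ`: there are monic orthogonal polynomials
satisfying the three-term recurrence. -/
def HasJacobi (μ : Measure ℝ) (β γ : ℕ → ℝ) : Prop :=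
  ∃ P : ℕ → Polynomial ℝ,
    (∀ n, (P n).Monic) ∧ (∀ n, (P n).natDegree = n) ∧
    (∀ i j, i ≠ j → ∫ x, (P i).eval x * (P j).eval x ∂μ = 0) ∧
    (Polynomial.X * P 0 = P 1 + Polynomial.C (β 0) * P 0) ∧
    (∀ n, Polynomial.X * P (n + 1) =
      P (n + 2) + Polynomial.C (β (n + 1)) * P (n + 1) + Polynomial.C (γ n) * P n)

/-- `r` is the sequence of free cumulants of `μ` (moment-cumulant formula over
noncrossing partitions). -/
def FreeCumulants (μ : Measure ℝ) (r : ℕ → ℝ) : Prop :=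
  ∀ m : ℕ, 1 ≤ m → mom μ m = ∑ π ∈ NCset m, ∏ V ∈ π.parts, r V.card

/-- `η` is the sequence of Boolean cumulants of `μ`. -/
def BooleanCumulants (μ : Measure ℝ) (η : ℕ → ℝ) : Prop :=
  ∀ m : ℕ, 1 ≤ m → mom μ m = ∑ π ∈ IntPart m, ∏ V ∈ π.parts, η V.card

/-- `R` is the sequence of two-state free cumulants of the pair `(μ̃, μ)`,
where `r` are the free cumulants of `μ`. -/
def TwoStateCumulants (μt μ : Measure ℝ) (R r : ℕ → ℝ) : Prop :=
  FreeCumulants μ r ∧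
  ∀ m : ℕ, 1 ≤ m → mom μt m =
    ∑ π ∈ NCset m,
      (∏ V ∈ π.parts.filter (fun V => depth π V = 0), R V.card) *
      (∏ V ∈ π.parts.filter (fun V => depth π V ≠ 0), r V.card)


-- ========== auxiliary machinery ==========

instance instNestsDec {m : ℕ} (U V : Finset (Fin m)) : Decidable (Nests U V) :=
  decidable_of_iff (∃ r ∈ U, ∃ s ∈ U, ∀ k ∈ V, r ≤ k ∧ k ≤ s) Iff.rfl

instance instIsNCDec {m : ℕ} (π : Finpartition (Finset.univ : Finset (Fin m))) :
    Decidable (IsNoncrossing π) :=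
  decidable_of_iff (∀ V₁ ∈ π.parts, ∀ V₂ ∈ π.parts, ∀ x₁ x₂ x₃ x₄ : Fin m,
    x₁ < x₂ → x₂ < x₃ → x₃ < x₄ →
    x₁ ∈ V₁ → x₃ ∈ V₁ → x₂ ∈ V₂ → x₄ ∈ V₂ → V₁ = V₂) Iff.rfl

/-- computable copy of `depth` -/
def depthB {m : ℕ} (π : Finpartition (Finset.univ : Finset (Fin m)))
    (V : Finset (Fin m)) : ℕ :=
  (π.parts.filter (fun U => U ≠ V ∧ Nests U V)).card

lemma depth_eq {m : ℕ} (π : Finpartition (Finset.univ : Finset (Fin m)))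
    (V : Finset (Fin m)) : depth π V = depthB π V := by
  unfold depth depthB
  exact congrArg Finset.card (Finset.filter_congr_decidable _ _ _)

lemma parts_eq_image {m : ℕ} (π : Finpartition (Finset.univ : Finset (Fin m))) :
    ∃ c : Fin m → Fin m,
      π.parts = Finset.univ.image (fun x => Finset.univ.filter fun y => c y = c x) := by
  have hne : ∀ x : Fin m, (π.part x).Nonempty := fun x => ⟨x, π.mem_part (mem_univ x)⟩
  refine ⟨fun x => (WithTop.untopD x (π.part x).min), ?_⟩
  have hc : ∀ x : Fin m, (WithTop.untopD x (π.part x).min) = (π.part x).min' (hne x) := fun x => by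
    rw [← Finset.coe_min' (hne x), WithTop.untopD_coe]
  have hcm : ∀ x : Fin m, (WithTop.untopD x (π.part x).min) ∈ π.part x := fun x => by
    rw [hc]; exact Finset.min'_mem _ _
  have hpc : ∀ x : Fin m, π.part ((WithTop.untopD x (π.part x).min)) = π.part x := fun x =>
    π.part_eq_of_mem (π.part_mem.2 (mem_univ x)) (hcm x)
  have hcc : ∀ x y : Fin m,
      ((WithTop.untopD y (π.part y).min) = (WithTop.untopD x (π.part x).min)) ↔ π.part y = π.part x := by
    intro x y
    constructor
    · intro h
      rw [← hpc y, h, hpc x]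
    · intro h
      rw [h, ← Finset.coe_min' (hne x), WithTop.untopD_coe, WithTop.untopD_coe]
  ext S
  simp only [mem_image, mem_univ, true_and]
  constructor
  · intro hS
    obtain ⟨x, hx⟩ := π.nonempty_of_mem_parts hS
    refine ⟨x, ?_⟩
    have hpx : π.part x = S := π.part_eq_of_mem hS hx
    ext y
    simp only [mem_filter, mem_univ, true_and]
    rw [hcc x y, ← hpx, ← π.mem_part_iff_part_eq_part (mem_univ y) (mem_univ x)]
  · rintro ⟨x, rfl⟩
    have : Finset.univ.filter (fun y => (WithTop.untopD y (π.part y).min) = (WithTop.untopD x (π.part x).min))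
        = π.part x := by
      ext y
      simp only [mem_filter, mem_univ, true_and]
      rw [hcc x y, ← π.mem_part_iff_part_eq_part (mem_univ y) (mem_univ x)]
    rw [this]
    exact π.part_mem.2 (mem_univ x)
def T1 : Finset (Finset (Finset (Fin 1))) := {{{0}}}

set_option maxRecDepth 40000 in
lemma partsMem1 (π : Finpartition (Finset.univ : Finset (Fin 1))) : π.parts ∈ T1 := by
  obtain ⟨c, hc⟩ := parts_eq_image π
  rw [hc]
  clear hc
  revert c
  decide
def q1_0 : Finpartition (Finset.univ : Finset (Fin 1)) :=
  ⟨{{0}}, by decide, by decide, by decide⟩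

lemma NCeq1 : NCset 1 = {q1_0} := by
  ext π
  simp only [NCset, mem_filter, mem_univ, true_and, mem_insert, mem_singleton]
  constructor
  · intro hnc
    have hp := partsMem1 π
    simp only [T1, mem_insert, mem_singleton] at hp
    exact Finpartition.ext hp
  · rintro rfl
    decide

lemma sumNC1 (R r : ℕ → ℝ) :
    ∑ π ∈ NCset 1,
      (∏ V ∈ π.parts.filter (fun V => depth π V = 0), R V.card) *
      (∏ V ∈ π.parts.filter (fun V => depth π V ≠ 0), r V.card)
    = R 1 := by
  have hdb : ∀ (π : Finpartition (Finset.univ : Finset (Fin 1))),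
      (∏ V ∈ π.parts.filter (fun V => depth π V = 0), R V.card) *
      (∏ V ∈ π.parts.filter (fun V => depth π V ≠ 0), r V.card)
      = (∏ V ∈ π.parts.filter (fun V => depthB π V = 0), R V.card) *
      (∏ V ∈ π.parts.filter (fun V => depthB π V ≠ 0), r V.card) := by
    intro π
    simp only [depth_eq]
  rw [Finset.sum_congr rfl fun π _ => hdb π, NCeq1]
  rw [Finset.sum_singleton]
  have t0 : (∏ V ∈ q1_0.parts.filter (fun V => depthB q1_0 V = 0), R V.card) *
      (∏ V ∈ q1_0.parts.filter (fun V => depthB q1_0 V ≠ 0), r V.card)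
      = (R 1 * (1)) * 1 := rfl
  rw [t0]
  ring

lemma sumFree1 (r : ℕ → ℝ) :
    ∑ π ∈ NCset 1, ∏ V ∈ π.parts, r V.card = r 1 := by
  rw [NCeq1]
  rw [Finset.sum_singleton]
  have t0 : ∏ V ∈ q1_0.parts, r V.card = (r 1 * (1)) := rfl
  rw [t0]
  ring
def T2 : Finset (Finset (Finset (Fin 2))) := {{{0},{1}}, {{0,1}}}

set_option maxRecDepth 40000 in
lemma partsMem2 (π : Finpartition (Finset.univ : Finset (Fin 2))) : π.parts ∈ T2 := by
  obtain ⟨c, hc⟩ := parts_eq_image π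
  rw [hc]
  clear hc
  revert c
  decide
def q2_0 : Finpartition (Finset.univ : Finset (Fin 2)) :=
  ⟨{{0},{1}}, by decide, by decide, by decide⟩
def q2_1 : Finpartition (Finset.univ : Finset (Fin 2)) :=
  ⟨{{0,1}}, by decide, by decide, by decide⟩

lemma NCeq2 : NCset 2 = {q2_0, q2_1} := by
  ext π
  simp only [NCset, mem_filter, mem_univ, true_and, mem_insert, mem_singleton]
  constructor
  · intro hnc
    have hp := partsMem2 π
    simp only [T2, mem_insert, mem_singleton] at hp
    rcases hp with h|h
    · exact Or.inl (Finpartition.ext h)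
    · exact Or.inr (Finpartition.ext h)
  · rintro (rfl|rfl) <;> decide

lemma sumNC2 (R r : ℕ → ℝ) :
    ∑ π ∈ NCset 2,
      (∏ V ∈ π.parts.filter (fun V => depth π V = 0), R V.card) *
      (∏ V ∈ π.parts.filter (fun V => depth π V ≠ 0), r V.card)
    = R 1 * R 1 + R 2 := by
  have hdb : ∀ (π : Finpartition (Finset.univ : Finset (Fin 2))),
      (∏ V ∈ π.parts.filter (fun V => depth π V = 0), R V.card) *
      (∏ V ∈ π.parts.filter (fun V => depth π V ≠ 0), r V.card)
      = (∏ V ∈ π.parts.filter (fun V => depthB π V = 0), R V.card) *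
      (∏ V ∈ π.parts.filter (fun V => depthB π V ≠ 0), r V.card) := by
    intro π
    simp only [depth_eq]
  rw [Finset.sum_congr rfl fun π _ => hdb π, NCeq2]
  rw [Finset.sum_insert (by decide), Finset.sum_singleton]
  have t0 : (∏ V ∈ q2_0.parts.filter (fun V => depthB q2_0 V = 0), R V.card) *
      (∏ V ∈ q2_0.parts.filter (fun V => depthB q2_0 V ≠ 0), r V.card)
      = (R 1 * (R 1 * (1))) * 1 := rfl
  have t1 : (∏ V ∈ q2_1.parts.filter (fun V => depthB q2_1 V = 0), R V.card) *
      (∏ V ∈ q2_1.parts.filter (fun V => depthB q2_1 V ≠ 0), r V.card)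
      = (R 2 * (1)) * 1 := rfl
  rw [t0, t1]
  ring

lemma sumFree2 (r : ℕ → ℝ) :
    ∑ π ∈ NCset 2, ∏ V ∈ π.parts, r V.card = r 1 * r 1 + r 2 := by
  rw [NCeq2]
  rw [Finset.sum_insert (by decide), Finset.sum_singleton]
  have t0 : ∏ V ∈ q2_0.parts, r V.card = (r 1 * (r 1 * (1))) := rfl
  have t1 : ∏ V ∈ q2_1.parts, r V.card = (r 2 * (1)) := rfl
  rw [t0, t1]
  ring
def T3 : Finset (Finset (Finset (Fin 3))) := {{{0},{1},{2}}, {{0},{1,2}}, {{0,1},{2}}, {{0,2},{1}}, {{0,1,2}}}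

set_option maxRecDepth 40000 in
lemma partsMem3 (π : Finpartition (Finset.univ : Finset (Fin 3))) : π.parts ∈ T3 := by
  obtain ⟨c, hc⟩ := parts_eq_image π
  rw [hc]
  clear hc
  revert c
  decide
def q3_0 : Finpartition (Finset.univ : Finset (Fin 3)) :=
  ⟨{{0},{1},{2}}, by decide, by decide, by decide⟩
def q3_1 : Finpartition (Finset.univ : Finset (Fin 3)) :=
  ⟨{{0},{1,2}}, by decide, by decide, by decide⟩
def q3_2 : Finpartition (Finset.univ : Finset (Fin 3)) :=
  ⟨{{0,1},{2}}, by decide, by decide, by decide⟩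
def q3_3 : Finpartition (Finset.univ : Finset (Fin 3)) :=
  ⟨{{0,2},{1}}, by decide, by decide, by decide⟩
def q3_4 : Finpartition (Finset.univ : Finset (Fin 3)) :=
  ⟨{{0,1,2}}, by decide, by decide, by decide⟩

lemma NCeq3 : NCset 3 = {q3_0, q3_1, q3_2, q3_3, q3_4} := by
  ext π
  simp only [NCset, mem_filter, mem_univ, true_and, mem_insert, mem_singleton]
  constructor
  · intro hnc
    have hp := partsMem3 π
    simp only [T3, mem_insert, mem_singleton] at hp
    rcases hp with h|h|h|h|h
    · exact Or.inl (Finpartition.ext h)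
    · exact Or.inr (Or.inl (Finpartition.ext h))
    · exact Or.inr (Or.inr (Or.inl (Finpartition.ext h)))
    · exact Or.inr (Or.inr (Or.inr (Or.inl (Finpartition.ext h))))
    · exact Or.inr (Or.inr (Or.inr (Or.inr (Finpartition.ext h))))
  · rintro (rfl|rfl|rfl|rfl|rfl) <;> decide

lemma sumNC3 (R r : ℕ → ℝ) :
    ∑ π ∈ NCset 3,
      (∏ V ∈ π.parts.filter (fun V => depth π V = 0), R V.card) *
      (∏ V ∈ π.parts.filter (fun V => depth π V ≠ 0), r V.card)
    = R 1 * R 1 * R 1 + R 1 * R 2 + R 2 * R 1 + R 2 * r 1 + R 3 := by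
  have hdb : ∀ (π : Finpartition (Finset.univ : Finset (Fin 3))),
      (∏ V ∈ π.parts.filter (fun V => depth π V = 0), R V.card) *
      (∏ V ∈ π.parts.filter (fun V => depth π V ≠ 0), r V.card)
      = (∏ V ∈ π.parts.filter (fun V => depthB π V = 0), R V.card) *
      (∏ V ∈ π.parts.filter (fun V => depthB π V ≠ 0), r V.card) := by
    intro π
    simp only [depth_eq]
  rw [Finset.sum_congr rfl fun π _ => hdb π, NCeq3]
  rw [Finset.sum_insert (by decide), Finset.sum_insert (by decide), Finset.sum_insert (by decide), Finset.sum_insert (by decide), Finset.sum_singleton]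
  have t0 : (∏ V ∈ q3_0.parts.filter (fun V => depthB q3_0 V = 0), R V.card) *
      (∏ V ∈ q3_0.parts.filter (fun V => depthB q3_0 V ≠ 0), r V.card)
      = (R 1 * (R 1 * (R 1 * (1)))) * 1 := rfl
  have t1 : (∏ V ∈ q3_1.parts.filter (fun V => depthB q3_1 V = 0), R V.card) *
      (∏ V ∈ q3_1.parts.filter (fun V => depthB q3_1 V ≠ 0), r V.card)
      = (R 1 * (R 2 * (1))) * 1 := rfl
  have t2 : (∏ V ∈ q3_2.parts.filter (fun V => depthB q3_2 V = 0), R V.card) *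
      (∏ V ∈ q3_2.parts.filter (fun V => depthB q3_2 V ≠ 0), r V.card)
      = (R 2 * (R 1 * (1))) * 1 := rfl
  have t3 : (∏ V ∈ q3_3.parts.filter (fun V => depthB q3_3 V = 0), R V.card) *
      (∏ V ∈ q3_3.parts.filter (fun V => depthB q3_3 V ≠ 0), r V.card)
      = (R 2 * (1)) * (r 1 * (1)) := rfl
  have t4 : (∏ V ∈ q3_4.parts.filter (fun V => depthB q3_4 V = 0), R V.card) *
      (∏ V ∈ q3_4.parts.filter (fun V => depthB q3_4 V ≠ 0), r V.card)
      = (R 3 * (1)) * 1 := rfl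
  rw [t0, t1, t2, t3, t4]
  ring
def T4 : Finset (Finset (Finset (Fin 4))) := {{{0},{1},{2},{3}}, {{0},{1},{2,3}}, {{0},{1,2},{3}}, {{0},{1,3},{2}}, {{0},{1,2,3}}, {{0,1},{2},{3}}, {{0,1},{2,3}}, {{0,2},{1},{3}}, {{0,2},{1,3}}, {{0,3},{1},{2}}, {{0,3},{1,2}}, {{0,1,2},{3}}, {{0,1,3},{2}}, {{0,2,3},{1}}, {{0,1,2,3}}}

set_option maxRecDepth 40000 in
lemma partsMem4 (π : Finpartition (Finset.univ : Finset (Fin 4))) : π.parts ∈ T4 := by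
  obtain ⟨c, hc⟩ := parts_eq_image π
  rw [hc]
  clear hc
  revert c
  decide
def q4_0 : Finpartition (Finset.univ : Finset (Fin 4)) :=
  ⟨{{0},{1},{2},{3}}, by decide, by decide, by decide⟩
def q4_1 : Finpartition (Finset.univ : Finset (Fin 4)) :=
  ⟨{{0},{1},{2,3}}, by decide, by decide, by decide⟩
def q4_2 : Finpartition (Finset.univ : Finset (Fin 4)) :=
  ⟨{{0},{1,2},{3}}, by decide, by decide, by decide⟩
def q4_3 : Finpartition (Finset.univ : Finset (Fin 4)) :=
  ⟨{{0},{1,3},{2}}, by decide, by decide, by decide⟩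
def q4_4 : Finpartition (Finset.univ : Finset (Fin 4)) :=
  ⟨{{0},{1,2,3}}, by decide, by decide, by decide⟩
def q4_5 : Finpartition (Finset.univ : Finset (Fin 4)) :=
  ⟨{{0,1},{2},{3}}, by decide, by decide, by decide⟩
def q4_6 : Finpartition (Finset.univ : Finset (Fin 4)) :=
  ⟨{{0,1},{2,3}}, by decide, by decide, by decide⟩
def q4_7 : Finpartition (Finset.univ : Finset (Fin 4)) :=
  ⟨{{0,2},{1},{3}}, by decide, by decide, by decide⟩
def q4_8 : Finpartition (Finset.univ : Finset (Fin 4)) :=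
  ⟨{{0,3},{1},{2}}, by decide, by decide, by decide⟩
def q4_9 : Finpartition (Finset.univ : Finset (Fin 4)) :=
  ⟨{{0,3},{1,2}}, by decide, by decide, by decide⟩
def q4_10 : Finpartition (Finset.univ : Finset (Fin 4)) :=
  ⟨{{0,1,2},{3}}, by decide, by decide, by decide⟩
def q4_11 : Finpartition (Finset.univ : Finset (Fin 4)) :=
  ⟨{{0,1,3},{2}}, by decide, by decide, by decide⟩
def q4_12 : Finpartition (Finset.univ : Finset (Fin 4)) :=
  ⟨{{0,2,3},{1}}, by decide, by decide, by decide⟩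
def q4_13 : Finpartition (Finset.univ : Finset (Fin 4)) :=
  ⟨{{0,1,2,3}}, by decide, by decide, by decide⟩

lemma NCeq4 : NCset 4 = {q4_0, q4_1, q4_2, q4_3, q4_4, q4_5, q4_6, q4_7, q4_8, q4_9, q4_10, q4_11, q4_12, q4_13} := by
  ext π
  simp only [NCset, mem_filter, mem_univ, true_and, mem_insert, mem_singleton]
  constructor
  · intro hnc
    have hp := partsMem4 π
    simp only [T4, mem_insert, mem_singleton] at hp
    rcases hp with h|h|h|h|h|h|h|h|h|h|h|h|h|h|h
    · exact Or.inl (Finpartition.ext h)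
    · exact Or.inr (Or.inl (Finpartition.ext h))
    · exact Or.inr (Or.inr (Or.inl (Finpartition.ext h)))
    · exact Or.inr (Or.inr (Or.inr (Or.inl (Finpartition.ext h))))
    · exact Or.inr (Or.inr (Or.inr (Or.inr (Or.inl (Finpartition.ext h)))))
    · exact Or.inr (Or.inr (Or.inr (Or.inr (Or.inr (Or.inl (Finpartition.ext h))))))
    · exact Or.inr (Or.inr (Or.inr (Or.inr (Or.inr (Or.inr (Or.inl (Finpartition.ext h)))))))
    · exact Or.inr (Or.inr (Or.inr (Or.inr (Or.inr (Or.inr (Or.inr (Or.inl (Finpartition.ext h))))))))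
    · exfalso
      have hV1 : ({0,2} : Finset (Fin 4)) ∈ π.parts := by rw [h]; decide
      have hV2 : ({1,3} : Finset (Fin 4)) ∈ π.parts := by rw [h]; decide
      exact absurd (hnc _ hV1 _ hV2 0 1 2 3 (by decide) (by decide) (by decide)
        (by decide) (by decide) (by decide) (by decide)) (by decide)
    · exact Or.inr (Or.inr (Or.inr (Or.inr (Or.inr (Or.inr (Or.inr (Or.inr (Or.inl (Finpartition.ext h)))))))))
    · exact Or.inr (Or.inr (Or.inr (Or.inr (Or.inr (Or.inr (Or.inr (Or.inr (Or.inr (Or.inl (Finpartition.ext h))))))))))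
    · exact Or.inr (Or.inr (Or.inr (Or.inr (Or.inr (Or.inr (Or.inr (Or.inr (Or.inr (Or.inr (Or.inl (Finpartition.ext h)))))))))))
    · exact Or.inr (Or.inr (Or.inr (Or.inr (Or.inr (Or.inr (Or.inr (Or.inr (Or.inr (Or.inr (Or.inr (Or.inl (Finpartition.ext h))))))))))))
    · exact Or.inr (Or.inr (Or.inr (Or.inr (Or.inr (Or.inr (Or.inr (Or.inr (Or.inr (Or.inr (Or.inr (Or.inr (Or.inl (Finpartition.ext h)))))))))))))
    · exact Or.inr (Or.inr (Or.inr (Or.inr (Or.inr (Or.inr (Or.inr (Or.inr (Or.inr (Or.inr (Or.inr (Or.inr (Or.inr (Finpartition.ext h)))))))))))))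
  · rintro (rfl|rfl|rfl|rfl|rfl|rfl|rfl|rfl|rfl|rfl|rfl|rfl|rfl|rfl) <;> decide

lemma sumNC4 (R r : ℕ → ℝ) :
    ∑ π ∈ NCset 4,
      (∏ V ∈ π.parts.filter (fun V => depth π V = 0), R V.card) *
      (∏ V ∈ π.parts.filter (fun V => depth π V ≠ 0), r V.card)
    = R 1 * R 1 * R 1 * R 1 + R 1 * R 1 * R 2 + R 1 * R 2 * R 1 + R 1 * R 2 * r 1 + R 1 * R 3 + R 2 * R 1 * R 1 + R 2 * R 2 + R 2 * r 1 * R 1 + R 2 * r 1 * r 1 + R 2 * r 2 + R 3 * R 1 + R 3 * r 1 + R 3 * r 1 + R 4 := by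
  have hdb : ∀ (π : Finpartition (Finset.univ : Finset (Fin 4))),
      (∏ V ∈ π.parts.filter (fun V => depth π V = 0), R V.card) *
      (∏ V ∈ π.parts.filter (fun V => depth π V ≠ 0), r V.card)
      = (∏ V ∈ π.parts.filter (fun V => depthB π V = 0), R V.card) *
      (∏ V ∈ π.parts.filter (fun V => depthB π V ≠ 0), r V.card) := by
    intro π
    simp only [depth_eq]
  rw [Finset.sum_congr rfl fun π _ => hdb π, NCeq4]
  rw [Finset.sum_insert (by decide), Finset.sum_insert (by decide), Finset.sum_insert (by decide), Finset.sum_insert (by decide), Finset.sum_insert (by decide), Finset.sum_insert (by decide), Finset.sum_insert (by decide), Finset.sum_insert (by decide), Finset.sum_insert (by decide), Finset.sum_insert (by decide), Finset.sum_insert (by decide), Finset.sum_insert (by decide), Finset.sum_insert (by decide), Finset.sum_singleton]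
  have t0 : (∏ V ∈ q4_0.parts.filter (fun V => depthB q4_0 V = 0), R V.card) *
      (∏ V ∈ q4_0.parts.filter (fun V => depthB q4_0 V ≠ 0), r V.card)
      = (R 1 * (R 1 * (R 1 * (R 1 * (1))))) * 1 := rfl
  have t1 : (∏ V ∈ q4_1.parts.filter (fun V => depthB q4_1 V = 0), R V.card) *
      (∏ V ∈ q4_1.parts.filter (fun V => depthB q4_1 V ≠ 0), r V.card)
      = (R 1 * (R 1 * (R 2 * (1)))) * 1 := rfl
  have t2 : (∏ V ∈ q4_2.parts.filter (fun V => depthB q4_2 V = 0), R V.card) *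
      (∏ V ∈ q4_2.parts.filter (fun V => depthB q4_2 V ≠ 0), r V.card)
      = (R 1 * (R 2 * (R 1 * (1)))) * 1 := rfl
  have t3 : (∏ V ∈ q4_3.parts.filter (fun V => depthB q4_3 V = 0), R V.card) *
      (∏ V ∈ q4_3.parts.filter (fun V => depthB q4_3 V ≠ 0), r V.card)
      = (R 1 * (R 2 * (1))) * (r 1 * (1)) := rfl
  have t4 : (∏ V ∈ q4_4.parts.filter (fun V => depthB q4_4 V = 0), R V.card) *
      (∏ V ∈ q4_4.parts.filter (fun V => depthB q4_4 V ≠ 0), r V.card)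
      = (R 1 * (R 3 * (1))) * 1 := rfl
  have t5 : (∏ V ∈ q4_5.parts.filter (fun V => depthB q4_5 V = 0), R V.card) *
      (∏ V ∈ q4_5.parts.filter (fun V => depthB q4_5 V ≠ 0), r V.card)
      = (R 2 * (R 1 * (R 1 * (1)))) * 1 := rfl
  have t6 : (∏ V ∈ q4_6.parts.filter (fun V => depthB q4_6 V = 0), R V.card) *
      (∏ V ∈ q4_6.parts.filter (fun V => depthB q4_6 V ≠ 0), r V.card)
      = (R 2 * (R 2 * (1))) * 1 := rfl
  have t7 : (∏ V ∈ q4_7.parts.filter (fun V => depthB q4_7 V = 0), R V.card) *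
      (∏ V ∈ q4_7.parts.filter (fun V => depthB q4_7 V ≠ 0), r V.card)
      = (R 2 * (R 1 * (1))) * (r 1 * (1)) := rfl
  have t8 : (∏ V ∈ q4_8.parts.filter (fun V => depthB q4_8 V = 0), R V.card) *
      (∏ V ∈ q4_8.parts.filter (fun V => depthB q4_8 V ≠ 0), r V.card)
      = (R 2 * (1)) * (r 1 * (r 1 * (1))) := rfl
  have t9 : (∏ V ∈ q4_9.parts.filter (fun V => depthB q4_9 V = 0), R V.card) *
      (∏ V ∈ q4_9.parts.filter (fun V => depthB q4_9 V ≠ 0), r V.card)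
      = (R 2 * (1)) * (r 2 * (1)) := rfl
  have t10 : (∏ V ∈ q4_10.parts.filter (fun V => depthB q4_10 V = 0), R V.card) *
      (∏ V ∈ q4_10.parts.filter (fun V => depthB q4_10 V ≠ 0), r V.card)
      = (R 3 * (R 1 * (1))) * 1 := rfl
  have t11 : (∏ V ∈ q4_11.parts.filter (fun V => depthB q4_11 V = 0), R V.card) *
      (∏ V ∈ q4_11.parts.filter (fun V => depthB q4_11 V ≠ 0), r V.card)
      = (R 3 * (1)) * (r 1 * (1)) := rfl
  have t12 : (∏ V ∈ q4_12.parts.filter (fun V => depthB q4_12 V = 0), R V.card) *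
      (∏ V ∈ q4_12.parts.filter (fun V => depthB q4_12 V ≠ 0), r V.card)
      = (R 3 * (1)) * (r 1 * (1)) := rfl
  have t13 : (∏ V ∈ q4_13.parts.filter (fun V => depthB q4_13 V = 0), R V.card) *
      (∏ V ∈ q4_13.parts.filter (fun V => depthB q4_13 V ≠ 0), r V.card)
      = (R 4 * (1)) * 1 := rfl
  rw [t0, t1, t2, t3, t4, t5, t6, t7, t8, t9, t10, t11, t12, t13]
  ring

lemma I4 (μ : Measure ℝ) [IsProbabilityMeasure μ] (hf : FiniteMoments μ) (a b c d e : ℝ) :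
    ∫ x, (a * x ^ 4 + (b * x ^ 3 + (c * x ^ 2 + (d * x ^ 1 + e)))) ∂μ
    = a * mom μ 4 + (b * mom μ 3 + (c * mom μ 2 + (d * mom μ 1 + e))) := by
  have h4 : Integrable (fun x : ℝ => a * x ^ 4) μ := (hf 4).const_mul a
  have h3 : Integrable (fun x : ℝ => b * x ^ 3) μ := (hf 3).const_mul b
  have h2 : Integrable (fun x : ℝ => c * x ^ 2) μ := (hf 2).const_mul c
  have h1 : Integrable (fun x : ℝ => d * x ^ 1) μ := (hf 1).const_mul d
  have he : Integrable (fun _ : ℝ => e) μ := integrable_const e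
  have ha1 : Integrable (fun x : ℝ => d * x ^ 1 + e) μ := h1.add he
  have ha2 : Integrable (fun x : ℝ => c * x ^ 2 + (d * x ^ 1 + e)) μ := h2.add ha1
  have ha3 : Integrable (fun x : ℝ => b * x ^ 3 + (c * x ^ 2 + (d * x ^ 1 + e))) μ := h3.add ha2
  rw [integral_add h4 ha3, integral_add h3 ha2, integral_add h2 ha1, integral_add h1 he,
    integral_const_mul, integral_const_mul, integral_const_mul, integral_const_mul,
    integral_const]
  simp [mom, measure_univ]

lemma momJacobi (μ : Measure ℝ) [IsProbabilityMeasure μ] (hf : FiniteMoments μ)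
    (β γ : ℕ → ℝ) (hJ : HasJacobi μ β γ) :
    mom μ 1 = β 0 ∧ mom μ 2 = β 0 ^ 2 + γ 0 ∧
    mom μ 3 = β 0 ^ 3 + 2 * β 0 * γ 0 + β 1 * γ 0 ∧
    mom μ 4 = β 0 ^ 4 + 3 * β 0 ^ 2 * γ 0 + 2 * β 0 * β 1 * γ 0 + β 1 ^ 2 * γ 0
      + γ 0 * γ 1 + γ 0 ^ 2 := by
  obtain ⟨P, hmon, hdeg, horth, hrec0, hrec⟩ := hJ
  have hP0 : P 0 = 1 := (hmon 0).natDegree_eq_zero.mp (hdeg 0)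
  have hP1 : P 1 = Polynomial.X - Polynomial.C (β 0) := by
    linear_combination (Polynomial.X - Polynomial.C (β 0)) * hP0 - hrec0
  have hP2 : P 2 = (Polynomial.X - Polynomial.C (β 1)) * P 1 - Polynomial.C (γ 0) := by
    linear_combination -(hrec 0) - Polynomial.C (γ 0) * hP0
  have hP3 : P 3 = (Polynomial.X - Polynomial.C (β 2)) * P 2 - Polynomial.C (γ 1) * P 1 := by
    linear_combination -(hrec 1)
  have e0 : ∀ x : ℝ, (P 0).eval x = 1 := fun x => by rw [hP0, Polynomial.eval_one]
  have e1 : ∀ x : ℝ, (P 1).eval x = x - β 0 := fun x => by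
    rw [hP1]
    simp only [Polynomial.eval_sub, Polynomial.eval_X, Polynomial.eval_C]
  have e2 : ∀ x : ℝ, (P 2).eval x = (x - β 1) * (x - β 0) - γ 0 := fun x => by
    rw [hP2]
    simp only [Polynomial.eval_sub, Polynomial.eval_mul, Polynomial.eval_X, Polynomial.eval_C]
    rw [e1 x]
  have e3 : ∀ x : ℝ, (P 3).eval x
      = (x - β 2) * ((x - β 1) * (x - β 0) - γ 0) - γ 1 * (x - β 0) := fun x => by
    rw [hP3]
    simp only [Polynomial.eval_sub, Polynomial.eval_mul, Polynomial.eval_X, Polynomial.eval_C]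
    rw [e1 x, e2 x]
  have h1 : (0:ℝ) = (0) * mom μ 4 + ((0) * mom μ 3 + ((0) * mom μ 2
      + (((1)) * mom μ 1 + ((-(β 0)))))) := by
    have key := horth 0 1 (by norm_num)
    rw [show (fun x : ℝ => (P 0).eval x * (P 1).eval x)
        = fun x : ℝ => (0) * x ^ 4 + ((0) * x ^ 3 + ((0) * x ^ 2
          + (((1)) * x ^ 1 + ((-(β 0)))))) from funext fun x => by rw [e0 x, e1 x]; ring] at key
    rw [I4 μ hf (0) (0) (0) ((1)) ((-(β 0)))] at key
    exact key.symm
  have h2 : (0:ℝ) = (0) * mom μ 4 + ((0) * mom μ 3 + (((1)) * mom μ 2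
      + (((-(β 1)) + (-(β 0))) * mom μ 1 + ((-(γ 0)) + (β 0 * β 1))))) := by
    have key := horth 0 2 (by norm_num)
    rw [show (fun x : ℝ => (P 0).eval x * (P 2).eval x)
        = fun x : ℝ => (0) * x ^ 4 + ((0) * x ^ 3 + (((1)) * x ^ 2
          + (((-(β 1)) + (-(β 0))) * x ^ 1 + ((-(γ 0)) + (β 0 * β 1))))) from funext fun x => by rw [e0 x, e2 x]; ring] at key
    rw [I4 μ hf (0) (0) ((1)) ((-(β 1)) + (-(β 0))) ((-(γ 0)) + (β 0 * β 1))] at key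
    exact key.symm
  have h3 : (0:ℝ) = (0) * mom μ 4 + (((1)) * mom μ 3 + (((-(β 2)) + (-(β 1)) + (-(β 0))) * mom μ 2
      + (((-(γ 1)) + (-(γ 0)) + (β 1 * β 2) + (β 0 * β 2) + (β 0 * β 1)) * mom μ 1 + ((β 2 * γ 0) + (β 0 * γ 1) + (-(β 0 * β 1 * β 2)))))) := by
    have key := horth 0 3 (by norm_num)
    rw [show (fun x : ℝ => (P 0).eval x * (P 3).eval x)
        = fun x : ℝ => (0) * x ^ 4 + (((1)) * x ^ 3 + (((-(β 2)) + (-(β 1)) + (-(β 0))) * x ^ 2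
          + (((-(γ 1)) + (-(γ 0)) + (β 1 * β 2) + (β 0 * β 2) + (β 0 * β 1)) * x ^ 1 + ((β 2 * γ 0) + (β 0 * γ 1) + (-(β 0 * β 1 * β 2)))))) from funext fun x => by rw [e0 x, e3 x]; ring] at key
    rw [I4 μ hf (0) ((1)) ((-(β 2)) + (-(β 1)) + (-(β 0))) ((-(γ 1)) + (-(γ 0)) + (β 1 * β 2) + (β 0 * β 2) + (β 0 * β 1)) ((β 2 * γ 0) + (β 0 * γ 1) + (-(β 0 * β 1 * β 2)))] at key
    exact key.symm
  have h4 : (0:ℝ) = ((1)) * mom μ 4 + (((-(β 2)) + (-(β 1)) + (-2 * β 0)) * mom μ 3 + (((-(γ 1)) + (-(γ 0)) + (β 1 * β 2) + (2 * β 0 * β 2) + (2 * β 0 * β 1) + (β 0 ^ 2)) * mom μ 2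
      + (((β 2 * γ 0) + (2 * β 0 * γ 1) + (β 0 * γ 0) + (-2 * β 0 * β 1 * β 2) + (-(β 0 ^ 2 * β 2)) + (-(β 0 ^ 2 * β 1))) * mom μ 1 + ((-(β 0 * β 2 * γ 0)) + (-(β 0 ^ 2 * γ 1)) + (β 0 ^ 2 * β 1 * β 2))))) := by
    have key := horth 1 3 (by norm_num)
    rw [show (fun x : ℝ => (P 1).eval x * (P 3).eval x)
        = fun x : ℝ => ((1)) * x ^ 4 + (((-(β 2)) + (-(β 1)) + (-2 * β 0)) * x ^ 3 + (((-(γ 1)) + (-(γ 0)) + (β 1 * β 2) + (2 * β 0 * β 2) + (2 * β 0 * β 1) + (β 0 ^ 2)) * x ^ 2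
          + (((β 2 * γ 0) + (2 * β 0 * γ 1) + (β 0 * γ 0) + (-2 * β 0 * β 1 * β 2) + (-(β 0 ^ 2 * β 2)) + (-(β 0 ^ 2 * β 1))) * x ^ 1 + ((-(β 0 * β 2 * γ 0)) + (-(β 0 ^ 2 * γ 1)) + (β 0 ^ 2 * β 1 * β 2))))) from funext fun x => by rw [e1 x, e3 x]; ring] at key
    rw [I4 μ hf ((1)) ((-(β 2)) + (-(β 1)) + (-2 * β 0)) ((-(γ 1)) + (-(γ 0)) + (β 1 * β 2) + (2 * β 0 * β 2) + (2 * β 0 * β 1) + (β 0 ^ 2)) ((β 2 * γ 0) + (2 * β 0 * γ 1) + (β 0 * γ 0) + (-2 * β 0 * β 1 * β 2) + (-(β 0 ^ 2 * β 2)) + (-(β 0 ^ 2 * β 1))) ((-(β 0 * β 2 * γ 0)) + (-(β 0 ^ 2 * γ 1)) + (β 0 ^ 2 * β 1 * β 2))] at key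
    exact key.symm
  have hm1 : mom μ 1 = β 0 := by linear_combination -h1
  have hm2 : mom μ 2 = β 0 ^ 2 + γ 0 := by linear_combination -h2 - ((-(β 1)) + (-(β 0))) * hm1
  have hm3 : mom μ 3 = β 0 ^ 3 + 2 * β 0 * γ 0 + β 1 * γ 0 := by linear_combination -h3 - ((-(γ 1)) + (-(γ 0)) + (β 1 * β 2) + (β 0 * β 2) + (β 0 * β 1)) * hm1 - ((-(β 2)) + (-(β 1)) + (-(β 0))) * hm2
  have hm4 : mom μ 4 = β 0 ^ 4 + 3 * β 0 ^ 2 * γ 0 + 2 * β 0 * β 1 * γ 0 + β 1 ^ 2 * γ 0 + γ 0 * γ 1 + γ 0 ^ 2 := by linear_combination -h4 - ((β 2 * γ 0) + (2 * β 0 * γ 1) + (β 0 * γ 0) + (-2 * β 0 * β 1 * β 2) + (-(β 0 ^ 2 * β 2)) + (-(β 0 ^ 2 * β 1))) * hm1 - ((-(γ 1)) + (-(γ 0)) + (β 1 * β 2) + (2 * β 0 * β 2) + (2 * β 0 * β 1) + (β 0 ^ 2)) * hm2 - ((-(β 2)) + (-(β 1)) + (-2 * β 0)) * hm3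
  exact ⟨hm1, hm2, hm3, hm4⟩

theorem stmt_10 (μt μ : Measure ℝ) [IsProbabilityMeasure μt] [IsProbabilityMeasure μ]
    (hfint : FiniteMoments μt) (hfin : FiniteMoments μ)
    (βt γt β γ : ℕ → ℝ) (hJt : HasJacobi μt βt γt) (hJ : HasJacobi μ β γ)
    (R r : ℕ → ℝ) (hR : TwoStateCumulants μt μ R r) :
    R 1 = βt 0 ∧ R 2 = γt 0 ∧ R 3 = γt 0 * (βt 1 - β 0) ∧
    R 4 = γt 0 * ((βt 1 - β 0) ^ 2 + (γt 1 - γ 0)) := by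
  obtain ⟨hfree, hmomt⟩ := hR
  obtain ⟨hm1, hm2, hm3, hm4⟩ := momJacobi μ hfin β γ hJ
  obtain ⟨ht1, ht2, ht3, ht4⟩ := momJacobi μt hfint βt γt hJt
  have hr1 : r 1 = β 0 := by
    have h := hfree 1 (by norm_num)
    rw [sumFree1 r] at h
    linarith
  have hr2 : r 2 = γ 0 := by
    have h := hfree 2 (by norm_num)
    rw [sumFree2 r] at h
    linear_combination -h + hm2 - (r 1 + β 0) * hr1
  have h1 := hmomt 1 (by norm_num)
  rw [sumNC1 R r] at h1
  have hR1 : R 1 = βt 0 := by linarith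
  have h2 := hmomt 2 (by norm_num)
  rw [sumNC2 R r] at h2
  rw [hR1] at h2
  have hR2 : R 2 = γt 0 := by linear_combination -h2 + ht2
  have h3 := hmomt 3 (by norm_num)
  rw [sumNC3 R r] at h3
  rw [hR1, hR2, hr1] at h3
  have hR3 : R 3 = γt 0 * (βt 1 - β 0) := by linear_combination -h3 + ht3
  have h4 := hmomt 4 (by norm_num)
  rw [sumNC4 R r] at h4
  rw [hR1, hR2, hR3, hr1, hr2] at h4
  have hR4 : R 4 = γt 0 * ((βt 1 - β 0) ^ 2 + (γt 1 - γ 0)) := by linear_combination -h4 + ht4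
  exact ⟨hR1, hR2, hR3, hR4⟩
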